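/- Let 0 < c₂ < c₁ < 1, ε < 1/4, z ∈ [0, 1/2], and z' ∈ (1/2 − c₁ε, 1/2 − c₂ε). With b = |(2/π) cos(π(z+z')/2)|, one has b ≥ (1/4)(1/2 − z + c₂ε). -/

import Mathlib

open Real

theorem stmt_12 (c₁ c₂ ε z z' : ℝ)
    (h2 : 0 < c₂) (h21 : c₂ < c₁) (h1 : c₁ < 1) (hε : 0 < ε) (hε4 : ε < 1/4)
    (hz : z ∈ Set.Icc (0:ℝ) (1/2))
    (hz' : z' ∈ Set.Ioo (1/2 - c₁ * ε) (1/2 - c₂ * ε)) :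
    (1/4) * (1/2 - z + c₂ * ε) ≤ |(2/π) * Real.cos (π * (z + z') / 2)| := by
  obtain ⟨hz0, hz1⟩ := hz
  obtain ⟨hz'1, hz'2⟩ := hz'
  have hπ := Real.pi_pos
  have hπ4 := Real.pi_le_four
  set t : ℝ := 1 - z - z' with ht
  have ht0 : 0 < t := by nlinarith
  have ht1 : t ≤ 1 := by nlinarith
  have htlb : 1/2 - z + c₂ * ε ≤ t := by nlinarith
  have hcos : Real.cos (π * (z + z') / 2) = Real.sin (π * t / 2) := by
    rw [← Real.sin_pi_div_two_sub]
    congr 1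
    rw [ht]; ring
  have harg0 : 0 ≤ π * t / 2 := by positivity
  have harg1 : π * t / 2 ≤ π / 2 := by nlinarith
  have hsin := Real.mul_le_sin harg0 harg1
  have hsin' : t ≤ Real.sin (π * t / 2) := by
    have : 2 / π * (π * t / 2) = t := by field_simp
    linarith [this ▸ hsin]
  have hpos : 0 ≤ (2/π) * Real.cos (π * (z + z') / 2) := by
    rw [hcos]; exact mul_nonneg (by positivity) (le_trans ht0.le hsin')
  rw [abs_of_nonneg hpos, hcos]
  have h2π : (1:ℝ)/4 ≤ 2/π := by
    rw [div_le_div_iff₀ (by norm_num) hπ]; linarith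
  nlinarith [hsin', htlb]
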